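/- Deterministic languages in Γ^∞ are closed under finite union and finite intersection, where a regular language L ⊆ Γ^∞ is called deterministic if L ∩ Γ^ω = →W ∩ Γ^ω for some W ⊆ Γ*. -/

import Mathlib

namespace InfWords

variable {Γ : Type}

/-- Finite and infinite words over `Γ`: `Γ^∞ = Γ* ∪ Γ^ω`. -/
abbrev Word (Γ : Type) := List Γ ⊕ (ℕ → Γ)

/-- Prepend a finite word to a finite or infinite word. -/
def wappend (u : List Γ) : Word Γ → Word Γ
  | Sum.inl v => Sum.inl (u ++ v)
  | Sum.inr f => Sum.inr fun n => if h : n < u.length then u.get ⟨n, h⟩ else f (n - u.length)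

/-- The set of finite words `Γ*` inside `Γ^∞`. -/
def finWords (Γ : Type) : Set (Word Γ) := Set.range Sum.inl

/-- The set of infinite words `Γ^ω` inside `Γ^∞`. -/
def infWords (Γ : Type) : Set (Word Γ) := Set.range Sum.inr

/-- The alphabet of a word: the letters occurring in it. -/
def alph : Word Γ → Set Γ
  | Sum.inl u => {a | a ∈ u}
  | Sum.inr f => {a | ∃ n, f n = a}

/-- The imaginary part: letters occurring infinitely often. -/
def im : Word Γ → Set Γ
  | Sum.inl _ => ∅
  | Sum.inr f => {a | ∀ n, ∃ m, n ≤ m ∧ f m = a}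

/-- `A^∞`: words all of whose letters lie in `A`. -/
def infin (A : Set Γ) : Set (Word Γ) := {α | alph α ⊆ A}

/-- The basic set `u A^∞` of the alphabetic topology. -/
def cone (u : List Γ) (A : Set Γ) : Set (Word Γ) := wappend u '' infin A

/-- The alphabetic topology on `Γ^∞`, generated by the sets `u A^∞`. -/
instance alphTop : TopologicalSpace (Word Γ) :=
  TopologicalSpace.generateFrom {S | ∃ u A, S = cone u A}

/-- `cpx A`: words with `alph = im = A`. -/
def cpx (A : Set Γ) : Set (Word Γ) := {β | alph β = A ∧ im β = A}

/-- The strict alphabetic topology, generated by the sets `u · cpx A`. -/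
def strictTopo (Γ : Type) : TopologicalSpace (Word Γ) :=
  TopologicalSpace.generateFrom {S | ∃ u A, S = wappend u '' cpx A}

/-- `u` is a finite prefix of the word `α`. -/
def IsPre (u : List Γ) : Word Γ → Prop
  | Sum.inl v => u <+: v
  | Sum.inr f => ∀ i : Fin u.length, u.get i = f i.1

/-- The arrow language `→W`: every prefix extends to a prefix lying in `W`. -/
def arrow (W : Set (List Γ)) : Set (Word Γ) :=
  {α | ∀ u, IsPre u α → ∃ v, IsPre (u ++ v) α ∧ u ++ v ∈ W}

/-- The right quotient `L / A^∞`. -/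
def quotInf (L : Set (Word Γ)) (A : Set Γ) : Set (List Γ) :=
  {u | ∃ β ∈ infin A, wappend u β ∈ L}

/-- `A^im`: words whose set of letters occurring infinitely often is exactly `A`. -/
def imSet (A : Set Γ) : Set (Word Γ) := {α | im α = A}

/-- `z^ω`, with the convention `1^ω = 1`. -/
def omegaPow : List Γ → Word Γ
  | [] => Sum.inl []
  | a :: l => Sum.inr fun n => (a :: l).get ⟨n % (a :: l).length, Nat.mod_lt n (Nat.succ_pos _)⟩

/-- The partial products `u v₀ v₁ ⋯ v_{n-1}`. -/
def partialProd (u : List Γ) (v : ℕ → List Γ) (n : ℕ) : List Γ :=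
  u ++ ((List.range n).map v).flatten

/-- `α` is the (finite or infinite) product `u v₀ v₁ v₂ ⋯`, with convention `1^ω = 1`. -/
def IsInfProd (u : List Γ) (v : ℕ → List Γ) : Word Γ → Prop
  | Sum.inl w => (∀ n, partialProd u v n <+: w) ∧ ∃ n, partialProd u v n = w
  | Sum.inr f => (∀ n, IsPre (partialProd u v n) (Sum.inr f)) ∧
      ∀ k, ∃ n, k < (partialProd u v n).length

/-- `h : Γ* → M` is a monoid homomorphism. -/
structure IsHom {M : Type} [Monoid M] (h : List Γ → M) : Prop where
  map_one : h [] = 1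
  map_mul : ∀ u v, h (u ++ v) = h u * h v

/-- `[s][e]^ω`: products `u v₀ v₁ ⋯` with `h u = s` and `h vᵢ = e`. -/
def pairSet {M : Type} (h : List Γ → M) (s e : M) : Set (Word Γ) :=
  {α | ∃ u v, h u = s ∧ (∀ i, h (v i) = e) ∧ IsInfProd u v α}

/-- `(s, e)` is a linked pair. -/
def LinkedPair {M : Type} [Monoid M] (s e : M) : Prop := s * e = s ∧ e * e = e

/-- `h` strongly recognizes `L`. -/
def StronglyRecognizes {M : Type} [Monoid M] (h : List Γ → M) (L : Set (Word Γ)) : Prop :=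
  L = ⋃ (s : M) (e : M) (_ : LinkedPair s e ∧ (pairSet h s e ∩ L).Nonempty), pairSet h s e

/-- `L` is regular: strongly recognized by a surjective homomorphism onto a finite monoid. -/
def Regular (L : Set (Word Γ)) : Prop :=
  ∃ (M : Type) (i : Monoid M), Finite M ∧
    ∃ h : List Γ → M, @IsHom Γ M i h ∧ Function.Surjective h ∧ @StronglyRecognizes Γ M i h L

/-- `L` is deterministic. -/
def Deterministic (L : Set (Word Γ)) : Prop :=
  Regular L ∧ ∃ W : Set (List Γ), L ∩ infWords Γ = arrow W ∩ infWords Γ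

/-- The syntactic preorder `u ≤_L v`. -/
def synLe (L : Set (Word Γ)) (u v : List Γ) : Prop :=
  ∀ x y z : List Γ,
    (wappend (x ++ v ++ y) (omegaPow z) ∈ L → wappend (x ++ u ++ y) (omegaPow z) ∈ L) ∧
    (wappend x (omegaPow (v ++ y)) ∈ L → wappend x (omegaPow (u ++ y)) ∈ L)

/-- The syntactic congruence `u ≡_L v`. -/
def synEq (L : Set (Word Γ)) (u v : List Γ) : Prop := synLe L u v ∧ synLe L v u

/-- `[s][e]^ω` for syntactic classes represented by words `s`, `e`. -/
def pairSetSyn (L : Set (Word Γ)) (s e : List Γ) : Set (Word Γ) :=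
  {α | ∃ u v, synEq L u s ∧ (∀ i, synEq L (v i) e) ∧ IsInfProd u v α}

/-- `s` represents an element of `M_e` in the syntactic monoid of `L`:
`s` is a product of words each of which is a factor of (something equivalent to) `e`. -/
def InMe (L : Set (Word Γ)) (e s : List Γ) : Prop :=
  ∃ parts : List (List Γ), s = parts.flatten ∧ ∀ p ∈ parts, ∃ x y, synEq L (x ++ p ++ y) e

/-- Glue a factorization `u₁ a₁ u₂ a₂ ⋯ u_k a_k` into a single finite word. -/
def glue : List (List Γ) → List (Set Γ × Γ) → List Γ
  | x :: xs, p :: l => x ++ p.2 :: glue xs l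
  | _, _ => []

/-- `(us, β)` is a factorization of `α` as `u₁ a₁ ⋯ u_k a_k β` with `uᵢ ∈ Aᵢ*`, `β ∈ B^∞`. -/
def IsFactorization (l : List (Set Γ × Γ)) (B : Set Γ) (us : List (List Γ)) (β : Word Γ)
    (α : Word Γ) : Prop :=
  us.length = l.length ∧
  (∀ (i : ℕ) (h1 : i < us.length) (h2 : i < l.length),
    ∀ c ∈ us.get ⟨i, h1⟩, c ∈ (l.get ⟨i, h2⟩).1) ∧
  β ∈ infin B ∧ α = wappend (glue us l) β

/-- The monomial `A₁* a₁ ⋯ A_k* a_k B^∞`. -/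
def monomial (l : List (Set Γ × Γ)) (B : Set Γ) : Set (Word Γ) :=
  {α | ∃ us β, IsFactorization l B us β α}

/-- The monomial given by `(l, B)` is unambiguous. -/
def Unambiguous (l : List (Set Γ × Γ)) (B : Set Γ) : Prop :=
  ∀ α us β us' β', IsFactorization l B us β α → IsFactorization l B us' β' α →
    us = us' ∧ β = β'

/-- `L` is a polynomial: a finite union of monomials. -/
def IsPolynomial (L : Set (Word Γ)) : Prop :=
  ∃ ms : List (List (Set Γ × Γ) × Set Γ), L = {α | ∃ m ∈ ms, α ∈ monomial m.1 m.2}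

/-- The set of marker letters of a monomial. -/
def sndSet (l : List (Set Γ × Γ)) : Set Γ := {a | ∃ p ∈ l, p.2 = a}

/-- `M_e`: the submonoid generated by the factors of the idempotent `e`. -/
def Msub {M : Type} [Monoid M] (e : M) : Submonoid M :=
  Submonoid.closure {t | ∃ x y, x * t * y = e}

/-- The variety `DA`: `ese = e` for all idempotents `e` and all `s ∈ M_e`. -/
def IsDA (M : Type) [Monoid M] : Prop :=
  ∀ e : M, e * e = e → ∀ s ∈ Msub e, e * s * e = e

end InfWords

namespace InfWords

variable {Γ : Type}

/-- prefix of length `n` of the infinite word `f` -/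
def pre (f : ℕ → Γ) : ℕ → List Γ
  | 0 => []
  | n + 1 => pre f n ++ [f n]

@[simp] lemma pre_length (f : ℕ → Γ) (n : ℕ) : (pre f n).length = n := by
  induction n with
  | zero => rfl
  | succ n ih => simp [pre, ih]

lemma pre_take (f : ℕ → Γ) {k m : ℕ} (h : k ≤ m) : (pre f m).take k = pre f k := by
  induction m with
  | zero => interval_cases k; rfl
  | succ m ih =>
    rcases Nat.lt_or_ge k (m + 1) with h' | h'
    · rw [pre, List.take_append_of_le_length (by simp [Nat.lt_succ_iff.mp h'])]
      exact ih (Nat.lt_succ_iff.mp h')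
    · have : k = m + 1 := le_antisymm h h'
      subst this
      exact List.take_of_length_le (by simp)

lemma pre_get (f : ℕ → Γ) (n : ℕ) (i : Fin (pre f n).length) : (pre f n).get i = f i.1 := by
  induction n with
  | zero => exact absurd i.2 (by simp [pre])
  | succ n ih =>
    obtain ⟨i, hi0⟩ := i
    have hi : i < n + 1 := by simpa using hi0
    simp only [List.get_eq_getElem] at ih ⊢
    show (pre f n ++ [f n])[i]'(by simpa using hi) = f i
    rcases Nat.lt_or_ge i n with h' | h'
    · rw [List.getElem_append_left (show i < (pre f n).length by simpa using h')]
      exact ih ⟨i, by simpa using h'⟩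
    · have hin : i = n := by omega
      subst hin
      have hl : (pre f i).length = i := pre_length f i
      rw [List.getElem_append_right (show (pre f i).length ≤ i by omega)]
      simp [hl]

lemma isPre_inr_iff (f : ℕ → Γ) (u : List Γ) :
    IsPre u (Sum.inr f) ↔ u = pre f u.length := by
  constructor
  · intro h
    apply List.ext_get (by simp)
    intro i h1 h2
    rw [h ⟨i, h1⟩, pre_get]
  · intro h
    intro i
    have := pre_get f u.length ⟨i.1, by rw [pre_length]; exact i.2⟩
    simp only [List.get_eq_getElem] at this ⊢
    rw [← this]
    exact (List.getElem_of_eq h.symm _).symm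

lemma pre_prefix (f : ℕ → Γ) {m n : ℕ} (h : m ≤ n) : pre f m <+: pre f n :=
  ⟨(pre f n).drop m, by conv_rhs => rw [← List.take_append_drop m (pre f n), pre_take f h]⟩

lemma arrow_inr_iff (W : Set (List Γ)) (f : ℕ → Γ) :
    Sum.inr f ∈ arrow W ↔ ∀ n, ∃ m, n ≤ m ∧ pre f m ∈ W := by
  constructor
  · intro h n
    obtain ⟨v, hv, hvW⟩ := h (pre f n) (by rw [isPre_inr_iff, pre_length])
    rw [isPre_inr_iff] at hv
    refine ⟨(pre f n ++ v).length, by simp, ?_⟩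
    rwa [← hv]
  · intro h u hu
    rw [isPre_inr_iff] at hu
    obtain ⟨m, hm, hmW⟩ := h u.length
    obtain ⟨v, hv⟩ := pre_prefix f hm
    rw [← hu] at hv
    refine ⟨v, ?_, by rwa [hv]⟩
    rw [isPre_inr_iff, hv]
    simp

open Classical in
/-- number of indices `k ≤ m` with `pre f k ∈ W` -/
noncomputable def cntp (W : Set (List Γ)) (f : ℕ → Γ) (m : ℕ) : ℕ :=
  ((Finset.range (m + 1)).filter (fun k => pre f k ∈ W)).card

open Classical in
/-- number of prefixes of `u` lying in `W` -/
noncomputable def cnt (W : Set (List Γ)) (u : List Γ) : ℕ :=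
  ((Finset.range (u.length + 1)).filter (fun k => u.take k ∈ W)).card

open Classical in
lemma cnt_pre (W : Set (List Γ)) (f : ℕ → Γ) (m : ℕ) : cnt W (pre f m) = cntp W f m := by
  unfold cnt cntp
  rw [pre_length]
  congr 1
  apply Finset.filter_congr
  intro k hk
  rw [Finset.mem_range] at hk
  rw [pre_take f (by omega)]

lemma cntp_mono (W : Set (List Γ)) (f : ℕ → Γ) : Monotone (cntp W f) := by
  intro m n h
  classical
  apply Finset.card_le_card
  intro k hk
  simp only [Finset.mem_filter, Finset.mem_range] at hk ⊢
  exact ⟨by omega, hk.2⟩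

lemma cntp_lt (W : Set (List Γ)) (f : ℕ → Γ) {m m' : ℕ} (h : m < m') (hW : pre f m' ∈ W) :
    cntp W f m < cntp W f m' := by
  classical
  have hsub : insert m' ((Finset.range (m + 1)).filter (fun k => pre f k ∈ W)) ⊆
      (Finset.range (m' + 1)).filter (fun k => pre f k ∈ W) := by
    intro k hk
    rcases Finset.mem_insert.mp hk with rfl | hk
    · simp [hW]
    · simp only [Finset.mem_filter, Finset.mem_range] at hk ⊢
      exact ⟨by omega, hk.2⟩
  have hnm : m' ∉ (Finset.range (m + 1)).filter (fun k => pre f k ∈ W) := by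
    simp only [Finset.mem_filter, Finset.mem_range]
    omega
  have := Finset.card_le_card hsub
  rw [Finset.card_insert_of_notMem hnm] at this
  exact lt_of_lt_of_le (Nat.lt_succ_self _) this

lemma cntp_unbounded_iff (W : Set (List Γ)) (f : ℕ → Γ) :
    (∀ j, ∃ m, j ≤ cntp W f m) ↔ (∀ n, ∃ m, n ≤ m ∧ pre f m ∈ W) := by
  constructor
  · intro h n
    obtain ⟨m, hm⟩ := h (cntp W f n + 1)
    by_contra hc
    push_neg at hc
    have hsub : cntp W f m ≤ cntp W f n := by
      classical
      apply Finset.card_le_card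
      intro k hk
      simp only [Finset.mem_filter, Finset.mem_range] at hk ⊢
      refine ⟨?_, hk.2⟩
      by_contra hkn
      exact hc k (by omega) hk.2
    omega
  · intro h j
    induction j with
    | zero => exact ⟨0, Nat.zero_le _⟩
    | succ j ih =>
      obtain ⟨m, hm⟩ := ih
      obtain ⟨m', hm', hW⟩ := h (m + 1)
      have := cntp_lt W f (show m < m' by omega) hW
      exact ⟨m', by omega⟩

/-- The set of "increase points" of a counting function `g`. -/
def incrSet (g : List Γ → ℕ) : Set (List Γ) := {u | g u.dropLast < g u}

@[simp] lemma dropLast_pre (f : ℕ → Γ) (n : ℕ) : (pre f (n + 1)).dropLast = pre f n := by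
  simp [pre]

lemma limP_incrSet (g : List Γ → ℕ) (f : ℕ → Γ)
    (mono : Monotone (fun m => g (pre f m))) :
    (∀ n, ∃ m, n ≤ m ∧ pre f m ∈ incrSet g) ↔ (∀ j, ∃ m, j ≤ g (pre f m)) := by
  constructor
  · intro h j
    induction j with
    | zero => exact ⟨0, Nat.zero_le _⟩
    | succ j ih =>
      obtain ⟨m, hm⟩ := ih
      obtain ⟨m', hm', hI⟩ := h (m + 1)
      obtain ⟨t, rfl⟩ : ∃ t, m' = t + 1 := ⟨m' - 1, by omega⟩
      simp only [incrSet, Set.mem_setOf_eq, dropLast_pre] at hI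
      have h1 : g (pre f m) ≤ g (pre f t) := mono (by omega)
      exact ⟨t + 1, by omega⟩
  · intro h n
    obtain ⟨m, hm⟩ := h (g (pre f n) + 1)
    by_contra hc
    push_neg at hc
    have key : ∀ d, g (pre f (n + d)) ≤ g (pre f n) := by
      intro d
      induction d with
      | zero => exact le_refl _
      | succ d ih =>
        have h2 := hc (n + d + 1) (by omega)
        simp only [incrSet, Set.mem_setOf_eq, dropLast_pre, not_lt] at h2
        rw [show n + d + 1 = n + (d+1) by omega] at h2
        omega
    have hnm : n < m := by
      by_contra hmn
      have := mono (show m ≤ n by omega)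
      simp only at this
      omega
    have := key (m - n)
    rw [show n + (m - n) = m by omega] at this
    omega


lemma inf_fiber {C : Type} [Finite C] {X : Set ℕ} (hX : X.Infinite) (col : ℕ → C) :
    ∃ d, {x ∈ X | col x = d}.Infinite := by
  by_contra h
  push_neg at h
  have h : ∀ d, {x ∈ X | col x = d}.Finite := fun d => by simpa using h d
  have hsub : X ⊆ ⋃ d, {x ∈ X | col x = d} := fun x hx => Set.mem_iUnion.2 ⟨col x, hx, rfl⟩
  exact hX ((Set.finite_iUnion h).subset hsub)

/-- Infinite Ramsey theorem for pairs with finitely many colors. -/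
theorem ramsey2 {C : Type} [Finite C] (c : ℕ → ℕ → C) :
    ∃ ψ : ℕ → ℕ, StrictMono ψ ∧ ∃ ε : C, ∀ i j, i < j → c (ψ i) (ψ j) = ε := by
  classical
  have next : ∀ X : {X : Set ℕ // X.Infinite}, ∃ Y : Set ℕ, Y.Infinite ∧ Y ⊆ X.1 ∧
      (∀ y ∈ Y, sInf X.1 < y) ∧ ∃ d, ∀ y ∈ Y, c (sInf X.1) y = d := by
    rintro ⟨X, hX⟩
    have hX' : (X \ Set.Iic (sInf X)).Infinite := hX.diff (Set.finite_Iic _)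
    obtain ⟨d, hd⟩ := inf_fiber hX' (c (sInf X))
    refine ⟨_, hd, fun y hy => hy.1.1, fun y hy => ?_, d, fun y hy => hy.2⟩
    have := hy.1.2
    simp only [Set.mem_Iic, not_le] at this
    exact this
  choose nxt hnxt1 hnxt2 hnxt3 hd using next
  choose col hcol using hd
  let F : ℕ → {X : Set ℕ // X.Infinite} := fun n =>
    Nat.rec ⟨Set.univ, Set.infinite_univ⟩ (fun _ X => ⟨nxt X, hnxt1 X⟩) n
  have hFsucc : ∀ n, (F (n + 1)).1 = nxt (F n) := fun n => rfl
  set a : ℕ → ℕ := fun n => sInf (F n).1 with ha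
  have hmem : ∀ n, a n ∈ (F n).1 := fun n => Nat.sInf_mem (F n).2.nonempty
  have hsub : ∀ n, (F (n + 1)).1 ⊆ (F n).1 := fun n => by rw [hFsucc]; exact hnxt2 _
  have hchain : ∀ m n, m ≤ n → (F n).1 ⊆ (F m).1 := by
    intro m n h
    induction n with
    | zero => rw [Nat.le_zero.mp h]
    | succ n ih =>
      rcases Nat.lt_or_ge m (n + 1) with h' | h'
      · exact (hsub n).trans (ih (by omega))
      · rw [le_antisymm h h']
  have hamono : StrictMono a := strictMono_nat_of_lt_succ fun n => by
    have := hmem (n + 1)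
    rw [hFsucc] at this
    exact hnxt3 _ _ this
  have hpair : ∀ i j, i < j → c (a i) (a j) = col (F i) := by
    intro i j hij
    have : a j ∈ (F (i + 1)).1 := hchain (i + 1) j hij (hmem j)
    rw [hFsucc] at this
    exact hcol (F i) _ this
  obtain ⟨ε, hε⟩ := inf_fiber (Set.infinite_univ (α := ℕ)) (fun n => col (F n))
  have hinf : {n | col (F n) = ε}.Infinite := by
    apply hε.mono
    intro x hx
    exact hx.2
  refine ⟨fun k => a (Nat.nth (fun n => col (F n) = ε) k),
    hamono.comp (Nat.nth_strictMono hinf), ε, ?_⟩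
  intro i j hij
  rw [hpair _ _ (Nat.nth_strictMono hinf hij)]
  exact Nat.nth_mem_of_infinite hinf i


noncomputable def unionW (W V : Set (List Γ)) : Set (List Γ) :=
  incrSet (fun u => max (cnt W u) (cnt V u))

noncomputable def interW (W V : Set (List Γ)) : Set (List Γ) :=
  incrSet (fun u => min (cnt W u) (cnt V u))

lemma arrow_unionW (W V : Set (List Γ)) (f : ℕ → Γ) :
    Sum.inr f ∈ arrow (unionW W V) ↔ Sum.inr f ∈ arrow W ∨ Sum.inr f ∈ arrow V := by
  have mono : Monotone (fun m => (fun u => max (cnt W u) (cnt V u)) (pre f m)) := by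
    intro a b h
    simp only [cnt_pre]
    exact max_le_max (cntp_mono W f h) (cntp_mono V f h)
  rw [arrow_inr_iff W, arrow_inr_iff V, arrow_inr_iff (unionW W V)]
  unfold unionW
  rw [limP_incrSet _ f mono, ← cntp_unbounded_iff W, ← cntp_unbounded_iff V]
  simp only [cnt_pre]
  constructor
  · intro h
    by_contra hc
    push_neg at hc
    obtain ⟨⟨j1, hj1⟩, ⟨j2, hj2⟩⟩ := hc
    obtain ⟨m, hm⟩ := h (j1 + j2)
    rcases le_max_iff.mp hm with h' | h'
    · have := hj1 m; omega
    · have := hj2 m; omega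
  · rintro (h | h) j
    · obtain ⟨m, hm⟩ := h j
      exact ⟨m, le_trans hm (le_max_left _ _)⟩
    · obtain ⟨m, hm⟩ := h j
      exact ⟨m, le_trans hm (le_max_right _ _)⟩

lemma arrow_interW (W V : Set (List Γ)) (f : ℕ → Γ) :
    Sum.inr f ∈ arrow (interW W V) ↔ Sum.inr f ∈ arrow W ∧ Sum.inr f ∈ arrow V := by
  have mono : Monotone (fun m => (fun u => min (cnt W u) (cnt V u)) (pre f m)) := by
    intro a b h
    simp only [cnt_pre]
    exact min_le_min (cntp_mono W f h) (cntp_mono V f h)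
  rw [arrow_inr_iff W, arrow_inr_iff V, arrow_inr_iff (interW W V)]
  unfold interW
  rw [limP_incrSet _ f mono, ← cntp_unbounded_iff W, ← cntp_unbounded_iff V]
  simp only [cnt_pre]
  constructor
  · intro h
    constructor <;> intro j <;> obtain ⟨m, hm⟩ := h j
    · exact ⟨m, le_trans hm (min_le_left _ _)⟩
    · exact ⟨m, le_trans hm (min_le_right _ _)⟩
  · rintro ⟨h1, h2⟩ j
    obtain ⟨m1, hm1⟩ := h1 j
    obtain ⟨m2, hm2⟩ := h2 j
    refine ⟨max m1 m2, le_min ?_ ?_⟩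
    · exact le_trans hm1 (cntp_mono W f (le_max_left _ _))
    · exact le_trans hm2 (cntp_mono V f (le_max_right _ _))

lemma mem_iff_of_inter_eq {L : Set (Word Γ)} {W : Set (List Γ)}
    (hW : L ∩ infWords Γ = arrow W ∩ infWords Γ) (f : ℕ → Γ) :
    Sum.inr f ∈ L ↔ Sum.inr f ∈ arrow W := by
  have hmem : (Sum.inr f : Word Γ) ∈ infWords Γ := ⟨f, rfl⟩
  have := Set.ext_iff.mp hW (Sum.inr f)
  simp only [Set.mem_inter_iff, hmem, and_true] at this
  exact this

lemma det_arrow_union {L K : Set (Word Γ)} {W V : Set (List Γ)}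
    (hW : L ∩ infWords Γ = arrow W ∩ infWords Γ)
    (hV : K ∩ infWords Γ = arrow V ∩ infWords Γ) :
    (L ∪ K) ∩ infWords Γ = arrow (unionW W V) ∩ infWords Γ := by
  ext α
  simp only [Set.mem_inter_iff, Set.mem_union]
  constructor
  · rintro ⟨h1, h2⟩
    obtain ⟨f, rfl⟩ := h2
    refine ⟨?_, ⟨f, rfl⟩⟩
    rw [arrow_unionW]
    rcases h1 with h1 | h1
    · exact Or.inl ((mem_iff_of_inter_eq hW f).mp h1)
    · exact Or.inr ((mem_iff_of_inter_eq hV f).mp h1)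
  · rintro ⟨h1, h2⟩
    obtain ⟨f, rfl⟩ := h2
    refine ⟨?_, ⟨f, rfl⟩⟩
    rw [arrow_unionW] at h1
    rcases h1 with h1 | h1
    · exact Or.inl ((mem_iff_of_inter_eq hW f).mpr h1)
    · exact Or.inr ((mem_iff_of_inter_eq hV f).mpr h1)

lemma det_arrow_inter {L K : Set (Word Γ)} {W V : Set (List Γ)}
    (hW : L ∩ infWords Γ = arrow W ∩ infWords Γ)
    (hV : K ∩ infWords Γ = arrow V ∩ infWords Γ) :
    (L ∩ K) ∩ infWords Γ = arrow (interW W V) ∩ infWords Γ := by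
  ext α
  simp only [Set.mem_inter_iff]
  constructor
  · rintro ⟨⟨h1, h1'⟩, h2⟩
    obtain ⟨f, rfl⟩ := h2
    refine ⟨?_, ⟨f, rfl⟩⟩
    rw [arrow_interW]
    exact ⟨(mem_iff_of_inter_eq hW f).mp h1, (mem_iff_of_inter_eq hV f).mp h1'⟩
  · rintro ⟨h1, h2⟩
    obtain ⟨f, rfl⟩ := h2
    rw [arrow_interW] at h1
    exact ⟨⟨(mem_iff_of_inter_eq hW f).mpr h1.1, (mem_iff_of_inter_eq hV f).mpr h1.2⟩, ⟨f, rfl⟩⟩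


section PartB

/-- `partialProd` at successor. -/
lemma partialProd_succ (u : List Γ) (v : ℕ → List Γ) (n : ℕ) :
    partialProd u v (n + 1) = partialProd u v n ++ v n := by
  simp [partialProd, List.range_succ]

lemma pre_split (f : ℕ → Γ) {i j : ℕ} (h : i ≤ j) :
    pre f i ++ (pre f j).drop i = pre f j := by
  conv_rhs => rw [← List.take_append_drop i (pre f j), pre_take f h]

lemma drop_pre_split (f : ℕ → Γ) {i j k : ℕ} (hij : i ≤ j) (hjk : j ≤ k) :
    (pre f j).drop i ++ (pre f k).drop j = (pre f k).drop i := by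
  have h1 : pre f k = pre f j ++ (pre f k).drop j := (pre_split f hjk).symm
  conv_rhs => rw [h1]
  rw [List.drop_append]
  have h2 : i - (pre f j).length = 0 := by rw [pre_length]; omega
  rw [h2, List.drop_zero]

/-- Every word belongs to some linked-pair set. -/
lemma exists_linked_pairSet {M : Type} [Monoid M] [Finite M] (h : List Γ → M)
    (hh : IsHom h) (α : Word Γ) :
    ∃ s e, LinkedPair s e ∧ α ∈ pairSet h s e := by
  cases α with
  | inl w =>
    have hpp : ∀ n, partialProd w (fun _ => ([] : List Γ)) n = w := by
      intro n
      induction n with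
      | zero => simp [partialProd]
      | succ n ih => rw [partialProd_succ, ih, List.append_nil]
    refine ⟨h w, 1, ⟨mul_one _, mul_one _⟩, w, fun _ => [], rfl, fun _ => hh.map_one,
      ?_, 0, hpp 0⟩
    intro n
    rw [hpp n]
  | inr f =>
    obtain ⟨ψ, hψ, ε, hc⟩ := ramsey2 (fun i j => h ((pre f j).drop i))
    have hidem : ε * ε = ε := by
      have h01 := hc 0 1 (by omega)
      have h12 := hc 1 2 (by omega)
      have h02 := hc 0 2 (by omega)
      calc ε * ε = h ((pre f (ψ 1)).drop (ψ 0)) * h ((pre f (ψ 2)).drop (ψ 1)) := by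
            rw [h01, h12]
        _ = h ((pre f (ψ 2)).drop (ψ 0)) := by
            rw [← hh.map_mul, drop_pre_split f (hψ.monotone (by omega)) (hψ.monotone (by omega))]
        _ = ε := h02
    set u' : List Γ := pre f (ψ 1) with hu'
    set v' : ℕ → List Γ := fun i => (pre f (ψ (i + 2))).drop (ψ (i + 1)) with hv'
    have hvε : ∀ i, h (v' i) = ε := fun i => hc (i + 1) (i + 2) (by omega)
    have hlink : h u' * ε = h u' := by
      have h1 : h u' = h (pre f (ψ 0)) * ε := by
        rw [hu', ← hc 0 1 (by omega), ← hh.map_mul, pre_split f (hψ.monotone (by omega))]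
      rw [h1, mul_assoc, hidem]
    have hpp : ∀ n, partialProd u' v' n = pre f (ψ (n + 1)) := by
      intro n
      induction n with
      | zero => simp [partialProd, hu']
      | succ n ih =>
        rw [partialProd_succ, ih, hv']
        exact pre_split f (hψ.monotone (by omega))
    refine ⟨h u', ε, ⟨hlink, hidem⟩, u', v', rfl, hvε, ?_, ?_⟩
    · intro n
      rw [hpp n, isPre_inr_iff, pre_length]
    · intro k
      refine ⟨k, ?_⟩
      rw [hpp k, pre_length]
      have : k + 1 ≤ ψ (k + 1) := hψ.le_apply
      omega

lemma pairSet_subset_of_SR {M : Type} [Monoid M] {h : List Γ → M} {L : Set (Word Γ)}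
    (sr : StronglyRecognizes h L) {s e : M} (hl : LinkedPair s e)
    (hne : (pairSet h s e ∩ L).Nonempty) : pairSet h s e ⊆ L := by
  intro α hα
  have : α ∈ ⋃ (s' : M) (e' : M)
      (_ : LinkedPair s' e' ∧ (pairSet h s' e' ∩ L).Nonempty), pairSet h s' e' :=
    Set.mem_iUnion.2 ⟨s, Set.mem_iUnion.2 ⟨e, Set.mem_iUnion.2 ⟨⟨hl, hne⟩, hα⟩⟩⟩
  rwa [← sr] at this

lemma SR_of_closed {M : Type} [Monoid M] [Finite M] {h : List Γ → M} (hh : IsHom h)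
    {T : Set (Word Γ)}
    (hT : ∀ s e, LinkedPair s e → (pairSet h s e ∩ T).Nonempty → pairSet h s e ⊆ T) :
    StronglyRecognizes h T := by
  apply Set.Subset.antisymm
  · intro α hα
    obtain ⟨s, e, hl, hm⟩ := exists_linked_pairSet h hh α
    exact Set.mem_iUnion.2 ⟨s, Set.mem_iUnion.2 ⟨e, Set.mem_iUnion.2 ⟨⟨hl, ⟨α, hm, hα⟩⟩, hm⟩⟩⟩
  · intro α hα
    simp only [Set.mem_iUnion] at hα
    obtain ⟨s, e, ⟨hl, hne⟩, hm⟩ := hα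
    exact hT s e hl hne hm

lemma regular_aux {M N : Type} [Monoid M] [Monoid N] [Finite M] [Finite N]
    {h1 : List Γ → M} {h2 : List Γ → N} (hom1 : IsHom h1) (hom2 : IsHom h2)
    {L K : Set (Word Γ)} (sr1 : StronglyRecognizes h1 L) (sr2 : StronglyRecognizes h2 K) :
    Regular (L ∪ K) ∧ Regular (L ∩ K) := by
  let S : Submonoid (M × N) :=
    { carrier := Set.range (fun u => (h1 u, h2 u))
      one_mem' := ⟨[], by simp [hom1.map_one, hom2.map_one, Prod.ext_iff]⟩
      mul_mem' := by
        rintro _ _ ⟨u, rfl⟩ ⟨v, rfl⟩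
        exact ⟨u ++ v, by simp [hom1.map_mul, hom2.map_mul, Prod.ext_iff]⟩ }
  let h' : List Γ → S := fun u => ⟨(h1 u, h2 u), ⟨u, rfl⟩⟩
  have hom' : IsHom h' := by
    constructor
    · exact Subtype.ext (by simp [h', hom1.map_one, hom2.map_one, Prod.ext_iff])
    · intro u v
      exact Subtype.ext (by simp [h', hom1.map_mul, hom2.map_mul, Prod.ext_iff])
  have surj' : Function.Surjective h' := by
    rintro ⟨x, u, rfl⟩
    exact ⟨u, rfl⟩
  have proj1 : ∀ s e : S, pairSet h' s e ⊆ pairSet h1 (s : M × N).1 (e : M × N).1 := by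
    rintro s e α ⟨u, v, hu, hv, hp⟩
    exact ⟨u, v, by rw [← hu], fun i => by rw [← hv i], hp⟩
  have proj2 : ∀ s e : S, pairSet h' s e ⊆ pairSet h2 (s : M × N).2 (e : M × N).2 := by
    rintro s e α ⟨u, v, hu, hv, hp⟩
    exact ⟨u, v, by rw [← hu], fun i => by rw [← hv i], hp⟩
  have link1 : ∀ s e : S, LinkedPair s e → LinkedPair (s : M × N).1 (e : M × N).1 := by
    rintro s e ⟨hse, hee⟩
    constructor
    · have := congrArg (fun x : S => (x : M × N).1) hse
      simpa using this
    · have := congrArg (fun x : S => (x : M × N).1) hee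
      simpa using this
  have link2 : ∀ s e : S, LinkedPair s e → LinkedPair (s : M × N).2 (e : M × N).2 := by
    rintro s e ⟨hse, hee⟩
    constructor
    · have := congrArg (fun x : S => (x : M × N).2) hse
      simpa using this
    · have := congrArg (fun x : S => (x : M × N).2) hee
      simpa using this
  constructor
  · refine ⟨S, inferInstance, inferInstance, h', hom', surj', SR_of_closed hom' ?_⟩
    rintro s e hl ⟨α, hαp, hαLK⟩ β hβ
    rcases hαLK with hαL | hαK
    · exact Or.inl (pairSet_subset_of_SR sr1 (link1 s e hl)
        ⟨α, proj1 s e hαp, hαL⟩ (proj1 s e hβ))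
    · exact Or.inr (pairSet_subset_of_SR sr2 (link2 s e hl)
        ⟨α, proj2 s e hαp, hαK⟩ (proj2 s e hβ))
  · refine ⟨S, inferInstance, inferInstance, h', hom', surj', SR_of_closed hom' ?_⟩
    rintro s e hl ⟨α, hαp, hαL, hαK⟩ β hβ
    exact ⟨pairSet_subset_of_SR sr1 (link1 s e hl) ⟨α, proj1 s e hαp, hαL⟩ (proj1 s e hβ),
      pairSet_subset_of_SR sr2 (link2 s e hl) ⟨α, proj2 s e hαp, hαK⟩ (proj2 s e hβ)⟩

end PartB


end InfWords

theorem deterministic_union_inter (Γ : Type) [Fintype Γ] (L K : Set (InfWords.Word Γ))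
    (hL : InfWords.Deterministic L) (hK : InfWords.Deterministic K) :
    InfWords.Deterministic (L ∪ K) ∧ InfWords.Deterministic (L ∩ K) := by
  obtain ⟨⟨M, iM, finM, h1, hom1, surj1, sr1⟩, W, hW⟩ := hL
  obtain ⟨⟨N, iN, finN, h2, hom2, surj2, sr2⟩, V, hV⟩ := hK
  letI := iM
  letI := iN
  haveI := finM
  haveI := finN
  have hreg := InfWords.regular_aux hom1 hom2 sr1 sr2
  exact ⟨⟨hreg.1, InfWords.unionW W V, InfWords.det_arrow_union hW hV⟩,
    ⟨hreg.2, InfWords.interW W V, InfWords.det_arrow_inter hW hV⟩⟩
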